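/- Let A, B ∈ ℝ^{d×d} be symmetric positive definite, c, o ∈ ℝ^d, and let p_s ∈ ℝ^d be a unit vector. Then for every x ∈ E(A,c) and every y ∈ E(B,o), one has ‖x − y‖ ≥ h(A,c,B,o,p_s). In particular, the barrier value h(A,c,B,o,p_s) is a lower bound for the Euclidean distance between the two ellipsoids. -/

import Mathlib

open scoped RealInnerProductSpace

/-- The linear action of a matrix `A` on `EuclideanSpace ℝ (Fin d)`. -/
noncomputable def mv {d : ℕ} (A : Matrix (Fin d) (Fin d) ℝ)
    (x : EuclideanSpace ℝ (Fin d)) : EuclideanSpace ℝ (Fin d) :=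
  (WithLp.equiv 2 (Fin d → ℝ)).symm (A.mulVec ((WithLp.equiv 2 (Fin d → ℝ)) x))

/-- The ellipsoid `E(A, c) = {c + A·s : ‖s‖ ≤ 1}`. -/
noncomputable def ellipsoid {d : ℕ} (A : Matrix (Fin d) (Fin d) ℝ)
    (c : EuclideanSpace ℝ (Fin d)) : Set (EuclideanSpace ℝ (Fin d)) :=
  {y | ∃ s : EuclideanSpace ℝ (Fin d), ‖s‖ ≤ 1 ∧ y = c + mv A s}

/-- The barrier value `h(A,c,B,o,p_s) = (−‖B·n‖ + ⟪o − c, n⟫ − 1)/‖n‖` with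
`n = A⁻¹·p_s` (Eq. (9) of the paper). -/
noncomputable def barrier {d : ℕ} (A : Matrix (Fin d) (Fin d) ℝ)
    (c : EuclideanSpace ℝ (Fin d)) (B : Matrix (Fin d) (Fin d) ℝ)
    (o : EuclideanSpace ℝ (Fin d)) (ps : EuclideanSpace ℝ (Fin d)) : ℝ :=
  (-‖mv B (mv A⁻¹ ps)‖ + ⟪o - c, mv A⁻¹ ps⟫ - 1) / ‖mv A⁻¹ ps‖

lemma mv_mv {d : ℕ} (M N : Matrix (Fin d) (Fin d) ℝ) (x : EuclideanSpace ℝ (Fin d)) :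
    mv M (mv N x) = mv (M * N) x := by
  simp [mv, Matrix.mulVec_mulVec]

lemma mv_one {d : ℕ} (x : EuclideanSpace ℝ (Fin d)) : mv 1 x = x := by
  simp [mv]

lemma mv_zero {d : ℕ} (M : Matrix (Fin d) (Fin d) ℝ) : mv M 0 = 0 := by
  ext i
  simp [mv, Matrix.mulVec]

lemma inner_mv {d : ℕ} (M : Matrix (Fin d) (Fin d) ℝ) (x y : EuclideanSpace ℝ (Fin d)) :
    ⟪mv M x, y⟫ = ⟪x, mv M.transpose y⟫ := by
  simp only [mv, PiLp.inner_apply, RCLike.inner_apply, conj_trivial]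
  simp only [WithLp.equiv_symm_apply, PiLp.toLp_apply, Matrix.mulVec, dotProduct,
    Matrix.transpose_apply, WithLp.equiv_apply, Finset.sum_mul, Finset.mul_sum]
  rw [Finset.sum_comm]
  apply Finset.sum_congr rfl; intro i _
  apply Finset.sum_congr rfl; intro j _
  ring

lemma transpose_eq_of_hermitian {d : ℕ} {M : Matrix (Fin d) (Fin d) ℝ}
    (hM : M.IsHermitian) : M.transpose = M := by
  ext i j
  simpa using congrFun (congrFun hM.eq i) j

theorem stmt5 {d : ℕ} (A B : Matrix (Fin d) (Fin d) ℝ)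
    (hA : A.PosDef) (hB : B.PosDef)
    (c o ps : EuclideanSpace ℝ (Fin d)) (hps : ‖ps‖ = 1) :
    ∀ x ∈ ellipsoid A c, ∀ y ∈ ellipsoid B o, ‖x - y‖ ≥ barrier A c B o ps := by
  rintro x ⟨s, hs, rfl⟩ y ⟨t, ht, rfl⟩
  set n := mv A⁻¹ ps with hn
  have hA1 : A * A⁻¹ = 1 := Matrix.mul_nonsing_inv A hA.det_pos.ne'.isUnit
  have hAn : mv A n = ps := by rw [hn, mv_mv, hA1, mv_one]
  have hn0 : n ≠ 0 := by
    intro h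
    have : ps = 0 := by rw [← hAn, h, mv_zero]
    simp [this] at hps
  have hnn : (0:ℝ) < ‖n‖ := norm_pos_iff.mpr hn0
  rw [ge_iff_le, barrier, ← hn, div_le_iff₀ hnn]
  have h1 : ⟪mv A s, n⟫ ≤ 1 := by
    rw [inner_mv, transpose_eq_of_hermitian hA.isHermitian, hAn]
    calc ⟪s, ps⟫ ≤ ‖s‖ * ‖ps‖ := real_inner_le_norm s ps
    _ ≤ 1 := by rw [hps]; simpa using hs
  have h2 : -‖mv B n‖ ≤ ⟪mv B t, n⟫ := by
    rw [inner_mv, transpose_eq_of_hermitian hB.isHermitian]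
    have := abs_real_inner_le_norm t (mv B n)
    have hb : ‖t‖ * ‖mv B n‖ ≤ ‖mv B n‖ := by
      nlinarith [norm_nonneg (mv B n)]
    have := abs_le.mp this
    linarith
  have key : -‖mv B n‖ + ⟪o - c, n⟫ - 1 ≤ ⟪(o + mv B t) - (c + mv A s), n⟫ := by
    have : ⟪(o + mv B t) - (c + mv A s), n⟫
        = ⟪o - c, n⟫ + ⟪mv B t, n⟫ - ⟪mv A s, n⟫ := by
      rw [← inner_add_left, ← inner_sub_left]
      congr 1
      abel
    rw [this]
    linarith
  calc -‖mv B n‖ + ⟪o - c, n⟫ - 1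
      ≤ ⟪(o + mv B t) - (c + mv A s), n⟫ := key
    _ ≤ ‖(o + mv B t) - (c + mv A s)‖ * ‖n‖ := real_inner_le_norm _ _
    _ = ‖(c + mv A s) - (o + mv B t)‖ * ‖n‖ := by rw [norm_sub_rev]
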